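/- Let p ∈ ℂ*, ζ = e^{2πi/3}, k, m ∈ {0,1,2}, and define the array E by E(1,2,3)=1, E(1,3,2)=p, E(2,1,3)=p·ζ^k, E(2,3,1)=ζ^m, E(3,1,2)=ζ^{-m}, E(3,2,1)=p·ζ^{-k}, and E=0 on non-permutation triples. Then: (a) the modular constants M_n = Σ_{j,l}|E(n,j,l)|² are all equal to 1+|p|²; (b) the diagonal constants p_j = Σ_{a,b} conj(E(j,a,b))·E(a,b,j) are all equal to ζ^m + |p|²·ζ^{-k}; (c) the characteristic constants satisfy c(1,2) = c(2,3) = c(3,1) = ζ^{-(k+m)}, where c(l,n) = (E(j,l,n)/E(j,n,l))·(E(n,l,j)/E(l,n,j)) with j completing {l,n} to {1,2,3}. -/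

import Mathlib

open Complex

/-- The array defining the quantum group `A_{p,k,m}(3)` (indices `0,1,2` stand for `1,2,3`). -/
noncomputable def AkmArr (p : ℂ) (k m : ℕ) : Fin 3 → Fin 3 → Fin 3 → ℂ := fun a b c =>
  let ζ : ℂ := Complex.exp (2 * Real.pi * Complex.I / 3)
  if (a, b, c) = ((0 : Fin 3), (1 : Fin 3), (2 : Fin 3)) then 1
  else if (a, b, c) = ((0 : Fin 3), (2 : Fin 3), (1 : Fin 3)) then p
  else if (a, b, c) = ((1 : Fin 3), (0 : Fin 3), (2 : Fin 3)) then p * ζ ^ (k : ℤ)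
  else if (a, b, c) = ((1 : Fin 3), (2 : Fin 3), (0 : Fin 3)) then ζ ^ (m : ℤ)
  else if (a, b, c) = ((2 : Fin 3), (0 : Fin 3), (1 : Fin 3)) then ζ ^ (-(m : ℤ))
  else if (a, b, c) = ((2 : Fin 3), (1 : Fin 3), (0 : Fin 3)) then p * ζ ^ (-(k : ℤ))
  else 0

/-- The modular constant `M_n = ∑_{j,l} |E(n,j,l)|²`. -/
noncomputable def modularConst (E : Fin 3 → Fin 3 → Fin 3 → ℂ) (n : Fin 3) : ℝ :=
  ∑ j : Fin 3, ∑ l : Fin 3, ‖E n j l‖ ^ 2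

/-- The diagonal constant `p_j = ∑_{a,b} conj(E(j,a,b)) · E(a,b,j)`. -/
noncomputable def diagConst (E : Fin 3 → Fin 3 → Fin 3 → ℂ) (j : Fin 3) : ℂ :=
  ∑ a : Fin 3, ∑ b : Fin 3, (starRingEnd ℂ) (E j a b) * E a b j

/-- The characteristic constant `c(l,n)` with third index `j`. -/
noncomputable def charConst (E : Fin 3 → Fin 3 → Fin 3 → ℂ) (l n j : Fin 3) : ℂ :=
  (E j l n / E j n l) * (E n l j / E l n j)

theorem stmt2 (p : ℂ) (hp : p ≠ 0) (k m : ℕ) (hk : k < 3) (hm : m < 3) :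
    (∀ n : Fin 3, modularConst (AkmArr p k m) n = 1 + ‖p‖ ^ 2) ∧
    (∀ j : Fin 3, diagConst (AkmArr p k m) j =
        Complex.exp (2 * Real.pi * Complex.I / 3) ^ (m : ℤ) +
          ((‖p‖ : ℝ) : ℂ) ^ 2 * Complex.exp (2 * Real.pi * Complex.I / 3) ^ (-(k : ℤ))) ∧
    (charConst (AkmArr p k m) 0 1 2 = Complex.exp (2 * Real.pi * Complex.I / 3) ^ (-((k : ℤ) + m)) ∧
      charConst (AkmArr p k m) 1 2 0 = Complex.exp (2 * Real.pi * Complex.I / 3) ^ (-((k : ℤ) + m)) ∧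
      charConst (AkmArr p k m) 2 0 1 = Complex.exp (2 * Real.pi * Complex.I / 3) ^ (-((k : ℤ) + m))) := by
  have hc0 : Complex.exp (2 * Real.pi * Complex.I / 3) ≠ 0 := Complex.exp_ne_zero _
  have habs : ‖Complex.exp (2 * Real.pi * Complex.I / 3)‖ = 1 := by
    have h : (2 * (Real.pi:ℂ) * Complex.I / 3) = ((2 * Real.pi / 3 : ℝ) : ℂ) * Complex.I := by
      push_cast; ring
    rw [h, Complex.norm_exp_ofReal_mul_I]
  have hconjc : (starRingEnd ℂ) (Complex.exp (2 * Real.pi * Complex.I / 3)) = (Complex.exp (2 * Real.pi * Complex.I / 3))⁻¹ := by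
    rw [← Complex.exp_conj, ← Complex.exp_neg]
    congr 1
    simp only [map_div₀, map_mul, Complex.conj_I, Complex.conj_ofReal, map_ofNat]
    ring
  have h3 : (Complex.exp (2 * Real.pi * Complex.I / 3)) ^ 3 = 1 := by
    rw [← Complex.exp_nat_mul,
      show ((3:ℕ):ℂ) * (2 * Real.pi * Complex.I / 3) = 2 * Real.pi * Complex.I by push_cast; ring,
      Complex.exp_two_pi_mul_I]
  have hk3 : ((Complex.exp (2 * Real.pi * Complex.I / 3)) ^ k) ^ 3 = 1 := by
    rw [← pow_mul, pow_mul', h3, one_pow]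
  have hm3 : ((Complex.exp (2 * Real.pi * Complex.I / 3)) ^ m) ^ 3 = 1 := by
    rw [← pow_mul, pow_mul', h3, one_pow]
  have hcp : (starRingEnd ℂ) p * p = ((‖p‖ : ℝ) : ℂ) ^ 2 := by
    rw [mul_comm, Complex.mul_conj, ← Complex.ofReal_pow, Complex.sq_norm]
  have hk0 : (Complex.exp (2 * Real.pi * Complex.I / 3)) ^ k ≠ 0 := pow_ne_zero _ hc0
  have hm0 : (Complex.exp (2 * Real.pi * Complex.I / 3)) ^ m ≠ 0 := pow_ne_zero _ hc0
  have hik : ((Complex.exp (2 * Real.pi * Complex.I / 3)) ^ k)⁻¹ = (Complex.exp (2 * Real.pi * Complex.I / 3)) ^ k * (Complex.exp (2 * Real.pi * Complex.I / 3)) ^ k := by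
    field_simp
    linear_combination -hk3
  have him : ((Complex.exp (2 * Real.pi * Complex.I / 3)) ^ m)⁻¹ = (Complex.exp (2 * Real.pi * Complex.I / 3)) ^ m * (Complex.exp (2 * Real.pi * Complex.I / 3)) ^ m := by
    field_simp
    linear_combination -hm3
  have hz : (Complex.exp (2 * Real.pi * Complex.I / 3)) ^ (-(m:ℤ) + -(k:ℤ))
      = (Complex.exp (2 * Real.pi * Complex.I / 3)) ^ m * (Complex.exp (2 * Real.pi * Complex.I / 3)) ^ m * ((Complex.exp (2 * Real.pi * Complex.I / 3)) ^ k * (Complex.exp (2 * Real.pi * Complex.I / 3)) ^ k) := by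
    rw [zpow_add₀ hc0, zpow_neg, zpow_neg, zpow_natCast, zpow_natCast, hik, him]
  refine ⟨?_, ?_, ?_, ?_, ?_⟩
  · intro n
    fin_cases n <;>
      simp [modularConst, AkmArr, Fin.sum_univ_three, map_mul, map_pow, habs, mul_pow] <;> ring
  · intro j
    fin_cases j
    · simp [diagConst, AkmArr, Fin.sum_univ_three, map_mul, map_pow, hconjc, inv_pow, hik, him]
      linear_combination (Complex.exp (2 * Real.pi * Complex.I / 3)) ^ k * (Complex.exp (2 * Real.pi * Complex.I / 3)) ^ k * hcp
    · simp [diagConst, AkmArr, Fin.sum_univ_three, map_mul, map_pow, hconjc, inv_pow, hik, him]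
      linear_combination (Complex.exp (2 * Real.pi * Complex.I / 3)) ^ k * (Complex.exp (2 * Real.pi * Complex.I / 3)) ^ k * hcp + (Complex.exp (2 * Real.pi * Complex.I / 3)) ^ m * hm3
    · simp [diagConst, AkmArr, Fin.sum_univ_three, map_mul, map_pow, hconjc, inv_pow, hik, him]
      linear_combination (Complex.exp (2 * Real.pi * Complex.I / 3)) ^ k * (Complex.exp (2 * Real.pi * Complex.I / 3)) ^ k * hcp + (Complex.exp (2 * Real.pi * Complex.I / 3)) ^ m * hm3
        + (Complex.exp (2 * Real.pi * Complex.I / 3)) ^ k * (Complex.exp (2 * Real.pi * Complex.I / 3)) ^ k * (starRingEnd ℂ) p * p * hk3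
  · simp [charConst, AkmArr, inv_pow, hik, him, hz]
    field_simp
    linear_combination -hk3
  · simp [charConst, AkmArr, inv_pow, hik, him, hz]
    field_simp
    linear_combination -hm3
  · simp [charConst, AkmArr, inv_pow, hik, him, hz]
    field_simp
    linear_combination -((Complex.exp (2 * Real.pi * Complex.I / 3)) ^ k) ^ 3 * hm3 - hk3
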